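/- Consider the exponential regression model with S = 2 and parameters θ = (θ₁, θ₂, θ₃, θ₄) with θ₁ ≠ 0, θ₃ ≠ 0 and 0 < θ₂ < θ₄. The gradient family f(x,θ) = (e^{−θ₂x}, −θ₁ x e^{−θ₂x}, e^{−θ₄x}, −θ₃ x e^{−θ₄x}) is a Chebyshev system on [0, ∞): for any points 0 ≤ x₁ < x₂ < x₃ < x₄, the 4×4 matrix with (i,j) entry f_j(x_i, θ) has nonzero determinant. -/

import Mathlib

open Real Set

lemma rolle_glob {f : ℝ → ℝ} (hf : Differentiable ℝ f) {a b : ℝ}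
    (hab : a < b) (h : f a = f b) : ∃ c, a < c ∧ c < b ∧ deriv f c = 0 := by
  obtain ⟨c, hc, hc0⟩ := exists_deriv_eq_zero hab hf.continuous.continuousOn h
  exact ⟨c, hc.1, hc.2, hc0⟩

lemma key {μ : ℝ} (hμ : 0 < μ) {a b c d : ℝ} {t : Fin 4 → ℝ} (ht : StrictMono t)
    (hz : ∀ i, a + b * t i + (c + d * t i) * Real.exp (-μ * t i) = 0) :
    a = 0 ∧ b = 0 ∧ c = 0 ∧ d = 0 := by
  have h01 : t 0 < t 1 := ht (by decide)
  have h12 : t 1 < t 2 := ht (by decide)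
  have h23 : t 2 < t 3 := ht (by decide)
  set g : ℝ → ℝ := fun s => a + b * s + (c + d * s) * Real.exp (-μ * s) with hgdef
  have hg : ∀ s, HasDerivAt g (b + (d - μ * (c + d * s)) * Real.exp (-μ * s)) s := by
    intro s
    have h1 : HasDerivAt (fun u : ℝ => -μ * u) (-μ) s := by
      simpa using (hasDerivAt_id s).const_mul (-μ)
    have h2 := h1.exp
    have h3 : HasDerivAt (fun u : ℝ => c + d * u) d s := by
      simpa using ((hasDerivAt_id s).const_mul d).const_add c
    have h5 : HasDerivAt (fun u : ℝ => a + b * u) b s := by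
      simpa using ((hasDerivAt_id s).const_mul b).const_add a
    have := h5.add (h3.mul h2)
    exact this.congr_deriv (by ring)
  have hgdiff : Differentiable ℝ g := fun s => (hg s).differentiableAt
  have hgz : ∀ i, g (t i) = 0 := fun i => hz i
  obtain ⟨s0, hs0a, hs0b, hs0⟩ := rolle_glob hgdiff h01 (by rw [hgz 0, hgz 1])
  obtain ⟨s1, hs1a, hs1b, hs1⟩ := rolle_glob hgdiff h12 (by rw [hgz 1, hgz 2])
  obtain ⟨s2, hs2a, hs2b, hs2⟩ := rolle_glob hgdiff h23 (by rw [hgz 2, hgz 3])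
  set h : ℝ → ℝ := fun s => b * Real.exp (μ * s) + (d - μ * c - μ * d * s) with hhdef
  have hhz : ∀ s, deriv g s = 0 → h s = 0 := by
    intro s hs
    have hds := (hg s).deriv
    rw [hds] at hs
    have hE : Real.exp (μ * s) * Real.exp (-μ * s) = 1 := by
      rw [← Real.exp_add]; norm_num
    have heq : h s = Real.exp (μ * s) * (b + (d - μ * (c + d * s)) * Real.exp (-μ * s)) := by
      simp only [hhdef]
      linear_combination (-(d - μ * (c + d * s))) * hE
    rw [heq, hs, mul_zero]
  have hh : ∀ s, HasDerivAt h (b * μ * Real.exp (μ * s) - μ * d) s := by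
    intro s
    have h1 : HasDerivAt (fun u : ℝ => μ * u) μ s := by
      simpa using (hasDerivAt_id s).const_mul μ
    have h2 := (h1.exp).const_mul b
    have h3 : HasDerivAt (fun u : ℝ => (d - μ * c) + -(μ * d) * u) (-(μ * d)) s := by
      simpa using ((hasDerivAt_id s).const_mul (-(μ * d))).const_add (d - μ * c)
    have h4 : HasDerivAt h (b * (Real.exp (μ * s) * μ) + -(μ * d)) s :=
      (h2.add h3).congr_of_eventuallyEq
      (Filter.Eventually.of_forall (fun u => by simp only [hhdef, Pi.add_apply]; ring))
    convert h4 using 1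
    ring
  have hhdiff : Differentiable ℝ h := fun s => (hh s).differentiableAt
  have hs01 : s0 < s1 := lt_trans hs0b hs1a
  have hs12 : s1 < s2 := lt_trans hs1b hs2a
  obtain ⟨u0, hu0a, hu0b, hu0⟩ := rolle_glob hhdiff hs01 (by rw [hhz s0 hs0, hhz s1 hs1])
  obtain ⟨u1, hu1a, hu1b, hu1⟩ := rolle_glob hhdiff hs12 (by rw [hhz s1 hs1, hhz s2 hs2])
  set k : ℝ → ℝ := fun s => b * μ * Real.exp (μ * s) - μ * d with hkdef
  have hkz : ∀ s, deriv h s = 0 → k s = 0 := by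
    intro s hs
    have := (hh s).deriv
    rw [this] at hs
    exact hs
  have hk : ∀ s, HasDerivAt k (b * μ * μ * Real.exp (μ * s)) s := by
    intro s
    have h1 : HasDerivAt (fun u : ℝ => μ * u) μ s := by
      simpa using (hasDerivAt_id s).const_mul μ
    have h2 := (h1.exp).const_mul (b * μ)
    have h3 := h2.sub_const (μ * d)
    exact h3.congr_deriv (by ring)
  have hkdiff : Differentiable ℝ k := fun s => (hk s).differentiableAt
  have hu01 : u0 < u1 := lt_trans hu0b hu1a
  obtain ⟨w, _, _, hw⟩ := rolle_glob hkdiff hu01 (by rw [hkz u0 hu0, hkz u1 hu1])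
  rw [(hk w).deriv] at hw
  have hb : b = 0 := by
    by_contra hb0
    exact (mul_ne_zero (mul_ne_zero (mul_ne_zero hb0 hμ.ne') hμ.ne')
      (Real.exp_ne_zero (μ * w))) hw
  have hd : d = 0 := by
    have h0 := hkz u0 hu0
    simp only [hkdef, hb, zero_mul, zero_sub, neg_eq_zero] at h0
    rcases mul_eq_zero.mp h0 with h' | h'
    · exact absurd h' hμ.ne'
    · exact h' 
  have hc : c = 0 := by
    have h0 := hhz s0 hs0
    simp only [hhdef, hb, hd, zero_mul, mul_zero, zero_add, sub_zero, zero_sub,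
      neg_eq_zero] at h0
    rcases mul_eq_zero.mp h0 with h' | h'
    · exact absurd h' hμ.ne'
    · exact h' 
  have ha : a = 0 := by
    have := hz 0
    rw [hb, hc, hd] at this
    simpa using this
  exact ⟨ha, hb, hc, hd⟩

/-- the gradient family of the two-compartment exponential regression model
is a Chebyshev system on `[0, ∞)`. -/
theorem stmt15 (θ₁ θ₂ θ₃ θ₄ : ℝ) (hθ₁ : θ₁ ≠ 0) (hθ₃ : θ₃ ≠ 0)
    (hθ₂ : 0 < θ₂) (hθ₂₄ : θ₂ < θ₄)
    (x : Fin 4 → ℝ) (hx0 : 0 ≤ x 0) (hx : StrictMono x) :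
    (Matrix.of fun i j : Fin 4 =>
      ![fun t => Real.exp (-θ₂ * t),
        fun t => -θ₁ * t * Real.exp (-θ₂ * t),
        fun t => Real.exp (-θ₄ * t),
        fun t => -θ₃ * t * Real.exp (-θ₄ * t)] j (x i)).det ≠ 0 := by
  intro hdet
  obtain ⟨v, hv, hmv⟩ := Matrix.exists_mulVec_eq_zero_iff.mpr hdet
  have hμ : 0 < θ₄ - θ₂ := sub_pos.mpr hθ₂₄
  have hrow : ∀ i : Fin 4, v 0 + (-θ₁ * v 1) * x i +
      (v 2 + (-θ₃ * v 3) * x i) * Real.exp (-(θ₄ - θ₂) * x i) = 0 := by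
    intro i
    have h0 := congrFun hmv i
    simp only [Matrix.mulVec, dotProduct, Fin.sum_univ_four, Matrix.of_apply,
      Matrix.cons_val_zero, Matrix.cons_val_one, Matrix.head_cons, Matrix.cons_val_two,
      Matrix.tail_cons, Matrix.cons_val_three, Pi.zero_apply] at h0
    have hexp : Real.exp (-(θ₄ - θ₂) * x i) * Real.exp (-θ₂ * x i)
        = Real.exp (-θ₄ * x i) := by
      rw [← Real.exp_add]; ring_nf
    have hfac : (v 0 + (-θ₁ * v 1) * x i +
        (v 2 + (-θ₃ * v 3) * x i) * Real.exp (-(θ₄ - θ₂) * x i)) * Real.exp (-θ₂ * x i)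
        = 0 := by
      linear_combination h0 + (v 2 + (-θ₃ * v 3) * x i) * hexp
    exact (mul_eq_zero.mp hfac).resolve_right (Real.exp_ne_zero _)
  obtain ⟨ha, hb, hc, hd⟩ := key hμ hx hrow
  apply hv
  funext j
  have hb' : v 1 = 0 := by
    rcases mul_eq_zero.mp (neg_eq_zero.mp (by linarith [hb] : -(θ₁ * v 1) = 0)) with h | h
    · exact absurd h hθ₁
    · exact h
  have hd' : v 3 = 0 := by
    rcases mul_eq_zero.mp (neg_eq_zero.mp (by linarith [hd] : -(θ₃ * v 3) = 0)) with h | h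
    · exact absurd h hθ₃
    · exact h
  fin_cases j <;> simp [ha, hb', hc, hd']
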